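/- In the VM-HPE framework, suppose for every k ≥ 1: r_k := M_k(z_{k−1} − z_k) ∈ T(z̃_k) and ‖z_k − z̃_k‖_{M_k}² + η_k ≤ σ‖z_{k−1} − z̃_k‖_{M_k}² + η_{k−1}, where T is maximal monotone with a zero z*, σ ∈ [0,1), η_k ≥ 0, and the operators satisfy M_k ⪯ (1+c_{k−1})M_{k−1} with ∏_{i=0}^{k}(1+c_i) ≤ C_P. Then for every k ≥ 1: ‖z* − z_k‖_{M_k}² + η_k + (1 − σ)∑_{i=1}^{k}‖z_{i−1} − z̃_i‖_{M_i}² ≤ C_P(‖z* − z₀‖_{M₀}² + η₀). -/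

import Mathlib

open RealInnerProductSpace Finset

lemma expand_sub {Z : Type*} [NormedAddCommGroup Z] [InnerProductSpace ℝ Z]
    (N : Z →ₗ[ℝ] Z) (hs : ∀ u v : Z, ⟪N u, v⟫ = ⟪u, N v⟫) (a b : Z) :
    ⟪N (a - b), a - b⟫ = ⟪N a, a⟫ - 2 * ⟪N b, a⟫ + ⟪N b, b⟫ := by
  have h : ⟪N b, a⟫ = ⟪N a, b⟫ := by rw [hs, real_inner_comm]
  simp [map_sub, inner_sub_left, inner_sub_right, h]
  ring

lemma expand_add {Z : Type*} [NormedAddCommGroup Z] [InnerProductSpace ℝ Z]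
    (N : Z →ₗ[ℝ] Z) (hs : ∀ u v : Z, ⟪N u, v⟫ = ⟪u, N v⟫) (a b : Z) :
    ⟪N (a + b), a + b⟫ = ⟪N a, a⟫ + 2 * ⟪N b, a⟫ + ⟪N b, b⟫ := by
  have h : ⟪N b, a⟫ = ⟪N a, b⟫ := by rw [hs, real_inner_comm]
  simp [map_add, inner_add_left, inner_add_right, h]
  ring

theorem stmt12 {Z : Type*} [NormedAddCommGroup Z] [InnerProductSpace ℝ Z]
    [FiniteDimensional ℝ Z] (T : Z → Set Z)
    (hmono : ∀ z z' v v', v ∈ T z → v' ∈ T z' → 0 ≤ ⟪v - v', z - z'⟫)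
    (zs : Z) (hzs : (0 : Z) ∈ T zs)
    (M : ℕ → (Z →ₗ[ℝ] Z))
    (hsym : ∀ k, ∀ u v : Z, ⟪M k u, v⟫ = ⟪u, M k v⟫)
    (hpsd : ∀ k, ∀ u : Z, 0 ≤ ⟪M k u, u⟫)
    (σ : ℝ) (hσ0 : 0 ≤ σ) (hσ1 : σ < 1)
    (η : ℕ → ℝ) (hη : ∀ k, 0 ≤ η k)
    (c : ℕ → ℝ) (hc : ∀ k, 0 ≤ c k) (C_P : ℝ)
    (hprod : ∀ k, ∏ i ∈ range (k + 1), (1 + c i) ≤ C_P)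
    (hcomp : ∀ k ≥ 1, ∀ u : Z, ⟪M k u, u⟫ ≤ (1 + c (k - 1)) * ⟪M (k - 1) u, u⟫)
    (z ztil : ℕ → Z)
    (hincl : ∀ k ≥ 1, M k (z (k - 1) - z k) ∈ T (ztil k))
    (herr : ∀ k ≥ 1,
      ⟪M k (z k - ztil k), z k - ztil k⟫ + η k ≤
        σ * ⟪M k (z (k - 1) - ztil k), z (k - 1) - ztil k⟫ + η (k - 1)) :
    ∀ k ≥ 1,
      ⟪M k (zs - z k), zs - z k⟫ + η k +
          (1 - σ) * ∑ i ∈ Icc 1 k, ⟪M i (z (i - 1) - ztil i), z (i - 1) - ztil i⟫ ≤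
        C_P * (⟪M 0 (zs - z 0), zs - z 0⟫ + η 0) := by
  set A : ℕ → ℝ := fun k => ⟪M k (zs - z k), zs - z k⟫ + η k with hA
  set d : ℕ → ℝ := fun i => ⟪M i (z (i - 1) - ztil i), z (i - 1) - ztil i⟫ with hd
  -- one-step inequality
  have step : ∀ k : ℕ, A (k + 1) + (1 - σ) * d (k + 1) ≤ (1 + c k) * A k := by
    intro k
    have h1 : (1 : ℕ) ≤ k + 1 := Nat.le_add_left 1 k
    set a := zs - z (k + 1) with ha
    set b := z k - z (k + 1) with hb
    set e := z (k + 1) - ztil (k + 1) with he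
    have hN := hsym (k + 1)
    -- monotonicity: ⟪N b, ztil - zs⟫ ≥ 0
    have hmon := hmono (ztil (k + 1)) zs (M (k + 1) (z (k + 1 - 1) - z (k + 1))) 0
      (hincl (k + 1) h1) hzs
    simp only [Nat.add_sub_cancel, sub_zero] at hmon
    have hts : ztil (k + 1) - zs = -e - a := by simp only [he, ha]; abel
    rw [hts] at hmon
    have hmon' : ⟪M (k + 1) b, a⟫ + ⟪M (k + 1) b, e⟫ ≤ 0 := by
      have := hmon
      rw [inner_sub_right, inner_neg_right] at this
      linarith
    -- expansions
    have hexp1 : ⟪M (k + 1) (a - b), a - b⟫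
        = ⟪M (k + 1) a, a⟫ - 2 * ⟪M (k + 1) b, a⟫ + ⟪M (k + 1) b, b⟫ :=
      expand_sub (M (k+1)) hN a b
    have hexp2 : ⟪M (k + 1) (b + e), b + e⟫
        = ⟪M (k + 1) b, b⟫ + 2 * ⟪M (k + 1) e, b⟫ + ⟪M (k + 1) e, e⟫ :=
      expand_add (M (k+1)) hN b e
    have hsw : ⟪M (k+1) e, b⟫ = ⟪M (k+1) b, e⟫ := by rw [hN, real_inner_comm]
    -- error condition
    have herr' := herr (k + 1) h1
    simp only [Nat.add_sub_cancel] at herr'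
    have hbe : z k - ztil (k + 1) = b + e := by
      simp only [hb, he]; abel
    rw [hbe, ← he] at herr'
    -- comparison of operators
    have hcmp := hcomp (k + 1) h1 (a - b)
    simp only [Nat.add_sub_cancel] at hcmp
    have hab : a - b = zs - z k := by simp [ha, hb]
    rw [hab] at hcmp
    -- assemble
    have hηk : 0 ≤ η k := hη k
    have hck : 0 ≤ c k := hc k
    have hd1 : d (k + 1) = ⟪M (k + 1) (b + e), b + e⟫ := by
      simp only [hd, Nat.add_sub_cancel]; rw [hbe]
    have hA1 : A (k + 1) = ⟪M (k + 1) a, a⟫ + η (k + 1) := rfl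
    have hA0 : A k = ⟪M k (zs - z k), zs - z k⟫ + η k := rfl
    rw [hd1, hA1, hA0]
    rw [← hab, hexp1] at hcmp
    rw [hab] at hcmp
    rw [hsw] at hexp2
    nlinarith [hmon', hexp2, herr', hcmp]
  -- partial sums are nonneg
  have hdpos : ∀ i, 0 ≤ d i := fun i => hpsd i _
  have hSpos : ∀ k, 0 ≤ ∑ i ∈ Icc 1 k, d i :=
    fun k => Finset.sum_nonneg fun i _ => hdpos i
  have hA0pos : 0 ≤ A 0 := add_nonneg (hpsd 0 _) (hη 0)
  have hProdpos : ∀ k, 0 ≤ ∏ i ∈ range k, (1 + c i) :=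
    fun k => Finset.prod_nonneg fun i _ => by linarith [hc i]
  -- induction
  have main : ∀ k : ℕ, A k + (1 - σ) * ∑ i ∈ Icc 1 k, d i
      ≤ (∏ i ∈ range k, (1 + c i)) * A 0 := by
    intro k
    induction k with
    | zero => simp
    | succ n ih =>
      have hsum : ∑ i ∈ Icc 1 (n + 1), d i = (∑ i ∈ Icc 1 n, d i) + d (n + 1) := by
        rw [Finset.sum_Icc_succ_top (Nat.le_add_left 1 n)]
      rw [hsum, Finset.prod_range_succ]
      have h1 := step n
      have h2 : (1 + c n) * (A n + (1 - σ) * ∑ i ∈ Icc 1 n, d i)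
          ≤ (1 + c n) * ((∏ i ∈ range n, (1 + c i)) * A 0) := by
        apply mul_le_mul_of_nonneg_left ih
        linarith [hc n]
      have h3 : (1 - σ) * ∑ i ∈ Icc 1 n, d i ≤ (1 + c n) * ((1 - σ) * ∑ i ∈ Icc 1 n, d i) := by
        nlinarith [mul_nonneg (mul_nonneg (hc n) (by linarith : (0:ℝ) ≤ 1 - σ)) (hSpos n)]
      nlinarith [h1, h2, h3]
  intro k hk
  have hfin : (∏ i ∈ range k, (1 + c i)) * A 0 ≤ C_P * A 0 := by
    apply mul_le_mul_of_nonneg_right _ hA0pos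
    calc ∏ i ∈ range k, (1 + c i) ≤ ∏ i ∈ range (k + 1), (1 + c i) := by
          rw [Finset.prod_range_succ]
          nlinarith [hProdpos k, hc k]
      _ ≤ C_P := hprod k
  have := (main k).trans hfin
  exact this
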